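/- Let E be a finite-dimensional real inner product space and f : E → ℝ a differentiable function that is bounded above and whose gradient ∇f is L-Lipschitz on E for some L ≥ 0 and uniformly bounded, i.e. ‖∇f(x)‖ ≤ G for all x and some G ≥ 0. Let α : ℕ → ℝ satisfy α(k) > 0 for all k, Σ_{k=0}^∞ α(k) = ∞, and Σ_{k=0}^∞ α(k)² < ∞. Let e : ℕ → E be a bounded error sequence with ‖e(k)‖ → 0 as k → ∞, and define a sequence (x(k)) by x(k+1) = x(k) + α(k)·(∇f(x(k)) + e(k)). Then liminf_{k→∞} ‖∇f(x(k))‖ = 0. -/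

import Mathlib

open scoped RealInnerProductSpace

lemma ascent_lemma' {E : Type*} [NormedAddCommGroup E] [InnerProductSpace ℝ E] [CompleteSpace E]
    (f : E → ℝ) (hdiff : Differentiable ℝ f) (L : ℝ) (hL0 : 0 ≤ L)
    (hLip : ∀ a b : E, ‖gradient f a - gradient f b‖ ≤ L * ‖a - b‖)
    (a v : E) :
    f a + ⟪gradient f a, v⟫ - L / 2 * ‖v‖ ^ 2 ≤ f (a + v) := by
  have hgcont : Continuous (gradient f) := by
    have : LipschitzWith L.toNNReal (gradient f) := by
      apply LipschitzWith.of_dist_le_mul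
      intro p q
      rw [dist_eq_norm, dist_eq_norm, Real.coe_toNNReal L hL0]
      exact hLip p q
    exact this.continuous
  set φ' : ℝ → ℝ := fun t => ⟪gradient f (a + t • v), v⟫ with hφ'
  have hderiv : ∀ t : ℝ, HasDerivAt (fun s : ℝ => f (a + s • v)) (φ' t) t := by
    intro t
    have h1 : HasDerivAt (fun s : ℝ => a + s • v) v t := by
      simpa using ((hasDerivAt_id t).smul_const v).const_add a
    have h2 := ((hdiff (a + t • v)).hasGradientAt).hasFDerivAt
    have := h2.comp_hasDerivAt t h1
    simpa [hφ', InnerProductSpace.toDual_apply_apply, Function.comp_def] using this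
  have hcont : Continuous φ' := by
    apply Continuous.inner
    · exact hgcont.comp (by continuity)
    · exact continuous_const
  have hint : IntervalIntegrable φ' MeasureTheory.volume 0 1 :=
    hcont.intervalIntegrable 0 1
  have heq : ∫ t in (0:ℝ)..1, φ' t = f (a + v) - f a := by
    have := intervalIntegral.integral_eq_sub_of_hasDerivAt
      (fun t _ => hderiv t) hint
    simpa using this
  have hlow : ∀ t ∈ Set.Icc (0:ℝ) 1, ⟪gradient f a, v⟫ - L * t * ‖v‖ ^ 2 ≤ φ' t := by
    intro t ht
    have habs : |⟪gradient f (a + t • v) - gradient f a, v⟫| ≤ (L * (t * ‖v‖)) * ‖v‖ := by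
      calc |⟪gradient f (a + t • v) - gradient f a, v⟫|
          ≤ ‖gradient f (a + t • v) - gradient f a‖ * ‖v‖ := abs_real_inner_le_norm _ _
        _ ≤ (L * ‖(a + t • v) - a‖) * ‖v‖ := by
            apply mul_le_mul_of_nonneg_right (hLip _ _) (norm_nonneg v)
        _ = (L * (t * ‖v‖)) * ‖v‖ := by
            rw [add_sub_cancel_left, norm_smul, Real.norm_eq_abs, abs_of_nonneg ht.1]
    have hkey : -((L * (t * ‖v‖)) * ‖v‖) ≤ φ' t - ⟪gradient f a, v⟫ := by
      have hsub : φ' t - ⟪gradient f a, v⟫ = ⟪gradient f (a + t • v) - gradient f a, v⟫ := by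
        simp [hφ', inner_sub_left]
      rw [hsub]
      linarith [neg_abs_le (⟪gradient f (a + t • v) - gradient f a, v⟫), habs]
    nlinarith [hkey, sq_nonneg (‖v‖)]
  have hmono : ∫ t in (0:ℝ)..1, (⟪gradient f a, v⟫ - L * t * ‖v‖ ^ 2) ≤ ∫ t in (0:ℝ)..1, φ' t := by
    apply intervalIntegral.integral_mono_on (by norm_num)
    · exact (Continuous.intervalIntegrable (by continuity) 0 1)
    · exact hint
    · intro t ht; exact hlow t ht
  have hval : ∫ t in (0:ℝ)..1, (⟪gradient f a, v⟫ - L * t * ‖v‖ ^ 2)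
      = ⟪gradient f a, v⟫ - L / 2 * ‖v‖ ^ 2 := by
    rw [intervalIntegral.integral_sub (continuous_const.intervalIntegrable 0 1)
      (Continuous.intervalIntegrable (by continuity) 0 1)]
    have h2 : ∫ t in (0:ℝ)..1, L * t * ‖v‖ ^ 2 = L / 2 * ‖v‖ ^ 2 := by
      have hfe : (fun t : ℝ => L * t * ‖v‖ ^ 2) = fun t : ℝ => (L * ‖v‖ ^ 2) * t := by
        funext t; ring
      rw [hfe, intervalIntegral.integral_const_mul, integral_id]
      ring
    rw [h2]
    simp
  rw [hval, heq] at hmono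
  linarith



/-- **Perturbed gradient ascent with stochastic-approximation step sizes
(mechanism behind Theorem 1 / Remark 2 of the paper).**
Let `E` be a finite-dimensional real inner product space and `f : E → ℝ` differentiable,
bounded above, with `L`-Lipschitz and uniformly bounded gradient.  Let `α k > 0` with
`Σ α k = ∞` and `Σ (α k)² < ∞`, and let `e` be a bounded error sequence with
`‖e k‖ → 0`.  If `x (k+1) = x k + α k • (∇f (x k) + e k)`, then
`liminf_k ‖∇f (x k)‖ = 0`. -/
theorem perturbed_gradient_ascent_liminf_grad_zero
    {E : Type*} [NormedAddCommGroup E] [InnerProductSpace ℝ E] [FiniteDimensional ℝ E]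
    (f : E → ℝ) (hdiff : Differentiable ℝ f)
    (hbdd : ∃ B : ℝ, ∀ z : E, f z ≤ B)
    (L : ℝ) (hL0 : 0 ≤ L)
    (hLip : ∀ a b : E, ‖gradient f a - gradient f b‖ ≤ L * ‖a - b‖)
    (G : ℝ) (hG0 : 0 ≤ G)
    (hG : ∀ z : E, ‖gradient f z‖ ≤ G)
    (α : ℕ → ℝ) (hαpos : ∀ k, 0 < α k)
    (hαdiv : Filter.Tendsto (fun N => ∑ k ∈ Finset.range N, α k) Filter.atTop Filter.atTop)
    (hα2 : Summable (fun k => (α k) ^ 2))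
    (e : ℕ → E) (hebdd : ∃ C : ℝ, ∀ k, ‖e k‖ ≤ C)
    (he0 : Filter.Tendsto (fun k => ‖e k‖) Filter.atTop (nhds 0))
    (x : ℕ → E)
    (hrec : ∀ k : ℕ, x (k + 1) = x k + α k • (gradient f (x k) + e k)) :
    Filter.liminf (fun k => ‖gradient f (x k)‖) Filter.atTop = 0 := by

  obtain ⟨B, hB⟩ := hbdd
  obtain ⟨C, hC⟩ := hebdd
  have hC0 : 0 ≤ C := le_trans (norm_nonneg (e 0)) (hC 0)
  set u : ℕ → ℝ := fun k => ‖gradient f (x k)‖ with hu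
  have hbd : Filter.IsBoundedUnder (· ≤ ·) Filter.atTop u :=
    ⟨G, Filter.eventually_map.2 (Filter.Eventually.of_forall fun k => hG _)⟩
  have hcobdd : Filter.IsCoboundedUnder (· ≥ ·) Filter.atTop u :=
    hbd.isCoboundedUnder_ge
  have hbdbelow : Filter.IsBoundedUnder (· ≥ ·) Filter.atTop u :=
    ⟨0, Filter.eventually_map.2 (Filter.Eventually.of_forall fun k => norm_nonneg _)⟩
  by_contra hne
  have h0 : 0 ≤ Filter.liminf u Filter.atTop :=
    Filter.le_liminf_of_le hcobdd (Filter.Eventually.of_forall fun k => norm_nonneg _)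
  set δ := Filter.liminf u Filter.atTop with hδ
  have hδpos : 0 < δ := lt_of_le_of_ne h0 (Ne.symm hne)
  have hev1 : ∀ᶠ k in Filter.atTop, δ / 2 < u k :=
    Filter.eventually_lt_of_lt_liminf (by linarith) hbdbelow
  have hev2 : ∀ᶠ k in Filter.atTop, ‖e k‖ < δ / 4 :=
    he0.eventually_lt_const (by linarith)
  obtain ⟨N, hN⟩ := (hev1.and hev2).exists_forall_of_atTop
  -- per-step inequality
  set c : ℝ := δ ^ 2 / 8 with hc
  set D : ℝ := L / 2 * (G + C) ^ 2 with hD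
  have hcpos : 0 < c := by positivity
  have hD0 : 0 ≤ D := by positivity
  have step : ∀ k, N ≤ k → f (x k) + (c * α k - D * α k ^ 2) ≤ f (x (k + 1)) := by
    intro k hk
    obtain ⟨hk1, hk2⟩ := hN k hk
    have hdesc := ascent_lemma' f hdiff L hL0 hLip (x k)
      (α k • (gradient f (x k) + e k))
    rw [← hrec k] at hdesc
    have hαk := hαpos k
    set g : E := gradient f (x k) with hgdef
    have hinner : ⟪g, α k • (g + e k)⟫ = α k * (‖g‖ ^ 2 + ⟪g, e k⟫) := by
      rw [real_inner_smul_right, inner_add_right, real_inner_self_eq_norm_sq]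
    have h1 : -(‖g‖ * ‖e k‖) ≤ ⟪g, e k⟫ := by
      linarith [neg_abs_le (⟪g, e k⟫ : ℝ), abs_real_inner_le_norm g (e k)]
    have hnorm : ‖α k • (g + e k)‖ ^ 2 ≤ α k ^ 2 * (G + C) ^ 2 := by
      rw [norm_smul, Real.norm_eq_abs, abs_of_pos hαk, mul_pow]
      have h2 : ‖g + e k‖ ≤ G + C :=
        le_trans (norm_add_le _ _) (add_le_add (hG _) (hC k))
      have h3 : ‖g + e k‖ ^ 2 ≤ (G + C) ^ 2 := by nlinarith [norm_nonneg (g + e k)]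
      nlinarith [sq_nonneg (α k)]
    have hq : c ≤ ‖g‖ ^ 2 - ‖g‖ * ‖e k‖ := by
      nlinarith [norm_nonneg (e k), norm_nonneg g]
    have hA : α k * (-(‖g‖ * ‖e k‖)) ≤ α k * ⟪g, e k⟫ :=
      mul_le_mul_of_nonneg_left h1 hαk.le
    have hB' : α k * c ≤ α k * (‖g‖ ^ 2 - ‖g‖ * ‖e k‖) :=
      mul_le_mul_of_nonneg_left hq hαk.le
    have hC' : L / 2 * ‖α k • (g + e k)‖ ^ 2 ≤ L / 2 * (α k ^ 2 * (G + C) ^ 2) :=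
      mul_le_mul_of_nonneg_left hnorm (by linarith)
    rw [hinner] at hdesc
    have hDeq : D * α k ^ 2 = L / 2 * (α k ^ 2 * (G + C) ^ 2) := by rw [hD]; ring
    have hsplit : α k * (‖g‖ ^ 2 + ⟪g, e k⟫) = α k * ‖g‖ ^ 2 + α k * ⟪g, e k⟫ :=
      mul_add _ _ _
    have hB'' : α k * c ≤ α k * ‖g‖ ^ 2 - α k * (‖g‖ * ‖e k‖) := by
      rw [mul_sub] at hB'; exact hB'
    rw [hsplit] at hdesc
    have hAneg : -(α k * (‖g‖ * ‖e k‖)) ≤ α k * ⟪g, e k⟫ := by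
      rw [mul_neg] at hA; exact hA
    linarith [hdesc, hAneg, hB'', hC', hDeq]
  -- summation
  have key : ∀ M : ℕ, f (x N) + ∑ k ∈ Finset.Ico N (N + M), (c * α k - D * α k ^ 2)
      ≤ f (x (N + M)) := by
    intro M
    induction M with
    | zero => simp
    | succ M ih =>
      rw [show N + (M + 1) = (N + M) + 1 from rfl,
        Finset.sum_Ico_succ_top (by omega : N ≤ N + M)]
      have := step (N + M) (by omega)
      linarith
  set T : ℝ := ∑' k, (α k) ^ 2 with hT
  have hsum : ∀ M : ℕ, c * ((∑ k ∈ Finset.range (N + M), α k) - ∑ k ∈ Finset.range N, α k)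
      - D * T ≤ B - f (x N) := by
    intro M
    have h1 : ∑ k ∈ Finset.Ico N (N + M), α k
        = (∑ k ∈ Finset.range (N + M), α k) - ∑ k ∈ Finset.range N, α k :=
      Finset.sum_Ico_eq_sub α (by omega)
    have h2 : ∑ k ∈ Finset.Ico N (N + M), (α k) ^ 2 ≤ T :=
      Summable.sum_le_tsum _ (fun i _ => sq_nonneg _) hα2
    have h3 : ∑ k ∈ Finset.Ico N (N + M), (c * α k - D * α k ^ 2)
        = c * (∑ k ∈ Finset.Ico N (N + M), α k)
          - D * ∑ k ∈ Finset.Ico N (N + M), (α k) ^ 2 := by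
      rw [Finset.sum_sub_distrib, Finset.mul_sum, Finset.mul_sum]
    have h4 := key M
    have h5 := hB (x (N + M))
    have h6 : D * ∑ k ∈ Finset.Ico N (N + M), (α k) ^ 2 ≤ D * T :=
      mul_le_mul_of_nonneg_left h2 hD0
    rw [h3, h1] at h4
    linarith
  -- contradiction with divergence
  have htend : Filter.Tendsto (fun M : ℕ => ∑ k ∈ Finset.range (N + M), α k)
      Filter.atTop Filter.atTop := by
    have := hαdiv.comp (Filter.tendsto_add_atTop_nat N)
    simpa [Function.comp_def, Nat.add_comm] using this
  obtain ⟨M, hM⟩ := (htend.eventually_gt_atTop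
    ((∑ k ∈ Finset.range N, α k) + (B - f (x N) + D * T) / c)).exists
  have := hsum M
  have hdivmul : (B - f (x N) + D * T) / c * c = B - f (x N) + D * T :=
    div_mul_cancel₀ _ (ne_of_gt hcpos)
  nlinarith [this, hM, hcpos]
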